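/- (Beck–Chevalley law) Let E be a locally cartesian closed category and suppose the commutative square with maps g : C → D, u : C → A, f : A → B, v : D → B (f∘u = v∘g) is cartesian. Then there are natural isomorphisms of functors u_! ∘ g* ≅ f* ∘ v_! : E/D → E/A and g_* ∘ u* ≅ v* ∘ f_* : E/A → E/D. -/

import Mathlib

open CategoryTheory CategoryTheory.Limits

universe v u

section Aux

variable {E : Type u} [Category.{v} E] [HasPullbacks E]

/-- The pasted pullback square used in the Beck–Chevalley isomorphism. -/
lemma bc_isPullback {A B C D : E} (g : C ⟶ D) (u : C ⟶ A) (f : A ⟶ B) (v : D ⟶ B)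
    (sq : IsPullback u g f v) (y : Over D) :
    IsPullback (pullback.fst y.hom g) (pullback.snd y.hom g ≫ u) (y.hom ≫ v) f :=
  (IsPullback.of_hasPullback y.hom g).paste_vert sq.flip

/-- The Beck–Chevalley natural isomorphism for `Over.pullback`. -/
noncomputable def bcIso {A B C D : E} (g : C ⟶ D) (u : C ⟶ A) (f : A ⟶ B) (v : D ⟶ B)
    (sq : IsPullback u g f v) :
    Over.pullback g ⋙ Over.map u ≅ Over.map v ⋙ Over.pullback f := by
  refine NatIso.ofComponents
    (fun y => Over.isoMk (bc_isPullback g u f v sq y).isoPullback ?_) ?_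
  · simp
  · intro y y' k
    ext
    dsimp
    apply pullback.hom_ext
    · simp [IsPullback.isoPullback_hom_fst]
      erw [pullback.lift_fst, pullback.lift_fst, IsPullback.isoPullback_hom_fst_assoc]
    · simp [IsPullback.isoPullback_hom_snd]
      erw [pullback.lift_snd, IsPullback.isoPullback_hom_snd, pullback.lift_snd_assoc]

end Aux

/-- Beck–Chevalley law: Let `E` be a locally cartesian closed category,
locally cartesian closedness being witnessed by base change functors `pb w` right
adjoint to the postcomposition functors `Over.map w` (`w_!`), together with
pushforward functors `pf w` (`w_*`) right adjoint to `pb w` (`w*`).  If the square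
`g : C ⟶ D`, `u : C ⟶ A`, `f : A ⟶ B`, `v : D ⟶ B` (with `u ≫ f = g ≫ v`) is
cartesian, then `u_! ∘ g* ≅ f* ∘ v_!` and `g_* ∘ u* ≅ v* ∘ f_*`. -/
theorem beck_chevalley {E : Type u} [Category.{v} E] [HasFiniteLimits E]
    (pb : ∀ {X Y : E}, (X ⟶ Y) → (Over Y ⥤ Over X))
    (adj₁ : ∀ {X Y : E} (w : X ⟶ Y), Over.map w ⊣ pb w)
    (pf : ∀ {X Y : E}, (X ⟶ Y) → (Over X ⥤ Over Y))
    (adj₂ : ∀ {X Y : E} (w : X ⟶ Y), pb w ⊣ pf w)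
    {A B C D : E} (g : C ⟶ D) (u : C ⟶ A) (f : A ⟶ B) (v : D ⟶ B)
    (sq : IsPullback u g f v) :
    Nonempty (pb g ⋙ Over.map u ≅ Over.map v ⋙ pb f) ∧
      Nonempty (pb u ⋙ pf g ≅ pf f ⋙ pb v) := by
  -- identify each `pb w` with `Over.pullback w` (both right adjoint to `Over.map w`)
  have pbIso : ∀ {X Y : E} (w : X ⟶ Y), pb w ≅ Over.pullback w :=
    fun w => (adj₁ w).rightAdjointUniq (Over.mapPullbackAdj w)
  -- the first Beck–Chevalley isomorphism
  have iso₁ : pb g ⋙ Over.map u ≅ Over.map v ⋙ pb f :=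
    Functor.isoWhiskerRight (pbIso g) (Over.map u) ≪≫ bcIso g u f v sq ≪≫
      Functor.isoWhiskerLeft (Over.map v) (pbIso f).symm
  refine ⟨⟨iso₁⟩, ⟨?_⟩⟩
  -- the second follows by conjugation (mates)
  exact conjugateIsoEquiv ((adj₂ g).comp (adj₁ u)) ((adj₁ v).comp (adj₂ f)) iso₁.symm
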